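/- Let α ∈ (0,1), let f be α-strongly regular on [0,∞), and let 0 < x₁ ≤ x₂ with f(x₁) > 0 and f(0) ≥ (1/(1−α))^{1/α} · f(x₁). Then ∫_{x₁}^{x₂} f(x) dx ≤ (1/(1−α)) · x₁ · (f(x₁) − f(x₂)); in particular ∫_{x₁}^{x₂} f(x) dx ≤ (1/(1−α)) · x₁ · f(x₁). -/

import Mathlib

open Real Set MeasureTheory intervalIntegral

/-- If `f` is α-strongly regular on `[0,∞)`, `0 < x₁ ≤ x₂`,
`f x₁ > 0`, and `f 0 ≥ (1/(1−α))^{1/α} · f x₁`, then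
`∫_{x₁}^{x₂} f ≤ (1/(1−α))·x₁·(f x₁ − f x₂)`, and in particular
`∫_{x₁}^{x₂} f ≤ (1/(1−α))·x₁·f x₁`. -/
theorem alpha_sr_integral_bound_of_peak
    (α : ℝ) (hα0 : 0 < α) (hα1 : α < 1)
    (f : ℝ → ℝ)
    (hf_nonneg : ∀ x, 0 ≤ x → 0 ≤ f x)
    (hf_anti : ∀ x y, 0 ≤ x → x ≤ y → f y ≤ f x)
    (hf_diff : ∀ x, 0 ≤ x → DifferentiableAt ℝ f x)
    (hf_deriv_neg : ∀ x, 0 ≤ x → deriv f x < 0)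
    (hf_sr : ∀ x₁ x₂, 0 ≤ x₁ → x₁ < x₂ →
      f x₂ / |deriv f x₂| - f x₁ / |deriv f x₁| ≤ α * (x₂ - x₁))
    (x₁ x₂ : ℝ) (hx₁ : 0 < x₁) (hx₁₂ : x₁ ≤ x₂)
    (hfx₁ : 0 < f x₁)
    (hpeak : (1 / (1 - α)) ^ (1 / α : ℝ) * f x₁ ≤ f 0) :
    (∫ x in x₁..x₂, f x) ≤ (1 / (1 - α)) * x₁ * (f x₁ - f x₂) ∧
      (∫ x in x₁..x₂, f x) ≤ (1 / (1 - α)) * x₁ * f x₁ := by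
  have hα1' : (0:ℝ) < 1 - α := by linarith
  -- D x = -(deriv f x) > 0
  have hD_pos : ∀ x, 0 ≤ x → 0 < -(deriv f x) := fun x hx => neg_pos.mpr (hf_deriv_neg x hx)
  have habs : ∀ x, 0 ≤ x → |deriv f x| = -(deriv f x) := fun x hx =>
    abs_of_neg (hf_deriv_neg x hx)
  -- hazard ratio
  set h : ℝ → ℝ := fun x => f x / (-(deriv f x)) with hhdef
  have hsr : ∀ a b, 0 ≤ a → a < b → h b ≤ h a + α * (b - a) := by
    intro a b ha hab
    have := hf_sr a b ha hab
    rw [habs a ha, habs b (le_trans ha hab.le)] at this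
    simp only [hhdef]
    linarith
  have hh_nonneg : ∀ x, 0 ≤ x → 0 ≤ h x := fun x hx =>
    div_nonneg (hf_nonneg x hx) (hD_pos x hx).le
  have hf_eq : ∀ x, 0 ≤ x → f x = h x * (-(deriv f x)) := fun x hx =>
    (div_mul_cancel₀ _ (hD_pos x hx).ne').symm
  have hh₁_pos : 0 < h x₁ := div_pos hfx₁ (hD_pos x₁ hx₁.le)
  -- Step 1 : h x₁ ≤ x₁
  have key1 : h x₁ ≤ x₁ := by
    by_contra hc
    push_neg at hc
    have hb0 : 0 < h x₁ - α * x₁ := by nlinarith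
    have hb_pos : ∀ x : ℝ, 0 ≤ x → 0 < h x₁ - α * (x₁ - x) := by
      intro x hx; nlinarith
    have hf_pos : ∀ x ∈ Icc (0:ℝ) x₁, 0 < f x := fun x hx =>
      lt_of_lt_of_le hfx₁ (hf_anti x x₁ hx.1 hx.2)
    set F : ℝ → ℝ := fun x => Real.log (f x) +
      (1/α) * Real.log (h x₁ - α * (x₁ - x)) with hFdef
    have hF : ∀ x ∈ Icc (0:ℝ) x₁,
        HasDerivAt F (deriv f x / f x + (1/α) * (α / (h x₁ - α * (x₁ - x)))) x := by
      intro x hx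
      have h1 := ((hf_diff x hx.1).hasDerivAt).log (hf_pos x hx).ne'
      have h2 : HasDerivAt (fun x : ℝ => h x₁ - α * (x₁ - x)) α x := by
        have : HasDerivAt (fun x : ℝ => h x₁ - α * (x₁ - x)) (0 - α * (0 - 1)) x :=
          (hasDerivAt_const x (h x₁)).sub
            (((hasDerivAt_const x x₁).sub (hasDerivAt_id x)).const_mul α)
        simpa using this
      have h3 := (h2.log (hb_pos x hx.1).ne').const_mul (1/α)
      exact h1.add h3
    have hF' : ∀ x ∈ Icc (0:ℝ) x₁,
        0 ≤ deriv f x / f x + (1/α) * (α / (h x₁ - α * (x₁ - x))) := by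
      intro x hx
      have hbx := hb_pos x hx.1
      have hfx := hf_pos x hx
      have hDx := hD_pos x hx.1
      have hbh : h x₁ - α * (x₁ - x) ≤ h x := by
        rcases eq_or_lt_of_le hx.2 with heq | hlt
        · rw [heq]; simp
        · have := hsr x x₁ hx.1 hlt; linarith
      have hfb : (h x₁ - α * (x₁ - x)) * (-(deriv f x)) ≤ f x := by
        rw [hf_eq x hx.1]
        exact mul_le_mul_of_nonneg_right hbh hDx.le
      have heq1 : deriv f x / f x + (1/α) * (α / (h x₁ - α * (x₁ - x)))
          = (f x - (h x₁ - α * (x₁ - x)) * (-(deriv f x)))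
            / ((h x₁ - α * (x₁ - x)) * f x) := by
        field_simp
        ring
      rw [heq1]
      apply div_nonneg (by linarith)
      positivity
    have hmono : MonotoneOn F (Icc 0 x₁) := by
      apply monotoneOn_of_deriv_nonneg (convex_Icc 0 x₁)
      · exact fun x hx => ((hF x hx).continuousAt).continuousWithinAt
      · intro x hx
        rw [interior_Icc] at hx
        exact ((hF x (Ioo_subset_Icc_self hx)).differentiableAt).differentiableWithinAt
      · intro x hx
        rw [interior_Icc] at hx
        rw [(hF x (Ioo_subset_Icc_self hx)).deriv]
        exact hF' x (Ioo_subset_Icc_self hx)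
    have hFle : F 0 ≤ F x₁ :=
      hmono (left_mem_Icc.mpr hx₁.le) (right_mem_Icc.mpr hx₁.le) hx₁.le
    have hf0_pos : 0 < f 0 := hf_pos 0 (left_mem_Icc.mpr hx₁.le)
    -- unfold F
    have hF0 : F 0 = Real.log (f 0) + (1/α) * Real.log (h x₁ - α * x₁) := by
      simp [hFdef]
    have hFx₁ : F x₁ = Real.log (f x₁) + (1/α) * Real.log (h x₁) := by
      simp [hFdef]
    rw [hF0, hFx₁] at hFle
    -- peak condition in logs
    have hpow_pos : (0:ℝ) < (1 / (1 - α)) ^ (1 / α : ℝ) :=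
      Real.rpow_pos_of_pos (by positivity) _
    have hlogpeak : (1/α) * Real.log (1/(1-α)) + Real.log (f x₁) ≤ Real.log (f 0) := by
      have := Real.log_le_log (by positivity) hpeak
      rwa [Real.log_mul hpow_pos.ne' hfx₁.ne', Real.log_rpow (by positivity)] at this
    have hkey : Real.log (1/(1-α)) + Real.log (h x₁ - α * x₁) ≤ Real.log (h x₁) := by
      have := add_le_add hlogpeak (le_refl ((1/α) * Real.log (h x₁ - α * x₁)))
      have h2 : (1/α) * (Real.log (1/(1-α)) + Real.log (h x₁ - α * x₁))
          ≤ (1/α) * Real.log (h x₁) := by nlinarith [hFle, hlogpeak]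
      have hα' : (0:ℝ) < 1/α := by positivity
      nlinarith [mul_le_mul_of_nonneg_left h2 hα0.le]
    have hfin : (1/(1-α)) * (h x₁ - α * x₁) ≤ h x₁ := by
      have hb0' : (0:ℝ) < (1/(1-α)) * (h x₁ - α * x₁) := by positivity
      rw [← Real.log_le_log_iff hb0' hh₁_pos, Real.log_mul (by positivity) hb0.ne']
      exact hkey
    have : h x₁ ≤ x₁ := by
      have h1 : h x₁ - α * x₁ ≤ (1 - α) * h x₁ := by
        rw [div_mul_eq_mul_div, one_mul, div_le_iff₀ hα1'] at hfin
        linarith [hfin]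
      nlinarith
    linarith
  -- Step 2 : the integral bound
  have hcont : ContinuousOn f (Ioi 0) := fun x hx =>
    ((hf_diff x (le_of_lt hx)).continuousAt).continuousWithinAt
  have hintf : ∀ t ∈ Icc x₁ x₂, IntervalIntegrable f volume x₁ t := by
    intro t ht
    apply ContinuousOn.intervalIntegrable
    apply hcont.mono
    rw [uIcc_of_le ht.1]
    exact fun y hy => lt_of_lt_of_le hx₁ hy.1
  set G : ℝ → ℝ := fun t => (1-α) * (∫ x in x₁..t, f x) + (h x₁ + α*(t - x₁)) * f t
    with hGdef
  have hG : ∀ t ∈ Icc x₁ x₂, HasDerivAt G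
      ((1-α) * f t + (α * f t + (h x₁ + α*(t - x₁)) * deriv f t)) t := by
    intro t ht
    have ht0 : 0 < t := lt_of_lt_of_le hx₁ ht.1
    have hI : HasDerivAt (fun u => ∫ x in x₁..u, f x) (f t) t :=
      intervalIntegral.integral_hasDerivAt_right (hintf t ht)
        (hcont.stronglyMeasurableAtFilter isOpen_Ioi t ht0)
        (hf_diff t ht0.le).continuousAt
    have ha : HasDerivAt (fun t : ℝ => h x₁ + α*(t - x₁)) α t := by
      have : HasDerivAt (fun t : ℝ => h x₁ + α*(t - x₁)) (0 + α * (1 - 0)) t :=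
        (hasDerivAt_const t (h x₁)).add
          (((hasDerivAt_id t).sub (hasDerivAt_const t x₁)).const_mul α)
      simpa using this
    have h2 : HasDerivAt (fun t => (h x₁ + α*(t - x₁)) * f t)
        (α * f t + (h x₁ + α*(t - x₁)) * deriv f t) t :=
      ha.mul ((hf_diff t ht0.le).hasDerivAt)
    exact (hI.const_mul (1-α)).add h2
  have hG' : ∀ t ∈ Icc x₁ x₂,
      (1-α) * f t + (α * f t + (h x₁ + α*(t - x₁)) * deriv f t) ≤ 0 := by
    intro t ht
    have ht0 : (0:ℝ) ≤ t := le_trans hx₁.le ht.1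
    have hht : h t ≤ h x₁ + α*(t - x₁) := by
      rcases eq_or_lt_of_le ht.1 with heq | hlt
      · rw [← heq]; simp
      · have := hsr x₁ t hx₁.le hlt; linarith
    have hDt := hD_pos t ht0
    have hfle : f t ≤ (h x₁ + α*(t - x₁)) * (-(deriv f t)) := by
      rw [hf_eq t ht0]
      exact mul_le_mul_of_nonneg_right hht hDt.le
    nlinarith
  have hanti : AntitoneOn G (Icc x₁ x₂) := by
    apply antitoneOn_of_deriv_nonpos (convex_Icc x₁ x₂)
    · exact fun t ht => ((hG t ht).continuousAt).continuousWithinAt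
    · intro t ht
      rw [interior_Icc] at ht
      exact ((hG t (Ioo_subset_Icc_self ht)).differentiableAt).differentiableWithinAt
    · intro t ht
      rw [interior_Icc] at ht
      rw [(hG t (Ioo_subset_Icc_self ht)).deriv]
      exact hG' t (Ioo_subset_Icc_self ht)
  have hGle : G x₂ ≤ G x₁ :=
    hanti (left_mem_Icc.mpr hx₁₂) (right_mem_Icc.mpr hx₁₂) hx₁₂
  have hGx₁ : G x₁ = h x₁ * f x₁ := by
    simp [hGdef]
  have hGx₂ : G x₂ = (1-α) * (∫ x in x₁..x₂, f x) + (h x₁ + α*(x₂ - x₁)) * f x₂ := rfl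
  rw [hGx₁, hGx₂] at hGle
  have hfx₂ : 0 ≤ f x₂ := hf_nonneg x₂ (le_trans hx₁.le hx₁₂)
  have hfd : f x₂ ≤ f x₁ := hf_anti x₁ x₂ hx₁.le hx₁₂
  have hmain : (1-α) * (∫ x in x₁..x₂, f x) ≤ x₁ * (f x₁ - f x₂) := by
    have h1 : h x₁ * f x₂ ≤ (h x₁ + α*(x₂ - x₁)) * f x₂ := by
      nlinarith [mul_nonneg (mul_nonneg hα0.le (sub_nonneg.mpr hx₁₂)) hfx₂]
    nlinarith [hh₁_pos]
  constructor
  · rw [div_mul_eq_mul_div, div_mul_eq_mul_div, one_mul, le_div_iff₀ hα1']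
    nlinarith
  · rw [div_mul_eq_mul_div, div_mul_eq_mul_div, one_mul, le_div_iff₀ hα1']
    nlinarith
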